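/- Let m ≥ 2 be a natural number, let u_h, u_l ≥ 0 be real numbers with (m−1)·u_h < 1, let x, y ∈ ℝ^m, let δ₁, …, δ_{m−1} be real numbers with |δ_k| ≤ u_h for all k, and let δ₀ be a real number with |δ₀| ≤ u_l. Define ŝ₁ := x₁y₁ and ŝ_{k+1} := (ŝ_k + x_{k+1}y_{k+1})(1 + δ_k) for k = 1, …, m−1. Then there exists Δx ∈ ℝ^m with |Δx_i| ≤ ((1+u_l)(1+γ_{m−1}(u_h)) − 1)·|x_i| for every i such that (1+δ₀)·ŝ_m = Σ_{i=1}^m (x_i + Δx_i)·y_i. -/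

import Mathlib

/-- For `u ≥ 0` and `t` with `t·u < 1`, `γ_t(u) := t·u/(1 − t·u)`. -/
noncomputable def gam (t u : ℝ) : ℝ := t * u / (1 - t * u)

lemma gam_nonneg {t u : ℝ} (hu : 0 ≤ u) (ht : 0 ≤ t) (h : t * u < 1) : 0 ≤ gam t u := by
  unfold gam
  apply div_nonneg (mul_nonneg ht hu)
  linarith

lemma gam_mono {c t u : ℝ} (hu : 0 ≤ u) (hc : 0 ≤ c) (hct : c ≤ t) (h : t * u < 1) :
    gam c u ≤ gam t u := by
  have h1 : c * u ≤ t * u := mul_le_mul_of_nonneg_right hct hu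
  have h2 : 0 ≤ c * u := mul_nonneg hc hu
  unfold gam
  rw [div_le_div_iff₀ (by linarith) (by linarith)]
  nlinarith

lemma prod_bounds (u : ℝ) (hu : 0 ≤ u) (δ : ℕ → ℝ) (S : Finset ℕ)
    (hδ : ∀ k ∈ S, |δ k| ≤ u) (h : (S.card : ℝ) * u < 1) :
    |(∏ k ∈ S, (1 + δ k)) - 1| ≤ gam (S.card : ℝ) u := by
  induction S using Finset.induction with
  | empty => simp [gam]
  | @insert a S ha ih =>
    rw [Finset.card_insert_of_notMem ha] at h ⊢
    push_cast at h ⊢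
    have hcard : (0:ℝ) ≤ (S.card:ℝ) := Nat.cast_nonneg _
    have hS : (S.card : ℝ) * u < 1 := by nlinarith
    have ihb := ih (fun k hk => hδ k (Finset.mem_insert_of_mem hk)) hS
    have hda : |δ a| ≤ u := hδ a (Finset.mem_insert_self a S)
    rw [Finset.prod_insert ha]
    set P := ∏ k ∈ S, (1 + δ k) with hP
    have key : (1 + δ a) * P - 1 = (P - 1) * (1 + δ a) + δ a := by ring
    rw [key]
    have h1 : |(P - 1) * (1 + δ a) + δ a| ≤ |P - 1| * (1 + u) + u := by
      calc |(P - 1) * (1 + δ a) + δ a| ≤ |(P - 1) * (1 + δ a)| + |δ a| := abs_add_le _ _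
        _ ≤ |P - 1| * (1 + u) + u := by
            rw [abs_mul]
            have : |1 + δ a| ≤ 1 + u := by
              have := abs_le.mp hda
              rw [abs_le]; constructor <;> linarith
            have := abs_nonneg (P - 1)
            nlinarith
    have hg : gam (S.card : ℝ) u * (1 + u) + u ≤ gam ((S.card : ℝ) + 1) u := by
      unfold gam
      have d1 : (0:ℝ) < 1 - (S.card : ℝ) * u := by linarith
      have d2 : (0:ℝ) < 1 - ((S.card : ℝ) + 1) * u := by push_cast at h ⊢; nlinarith
      rw [div_mul_eq_mul_div, div_add' _ _ _ (ne_of_gt d1), div_le_div_iff₀ d1 d2]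
      nlinarith [mul_nonneg (add_nonneg (mul_nonneg hcard hu) hu) hu]
    have hgn : 0 ≤ gam (S.card : ℝ) u := gam_nonneg hu hcard hS
    calc |(P - 1) * (1 + δ a) + δ a| ≤ |P - 1| * (1 + u) + u := h1
      _ ≤ gam (S.card : ℝ) u * (1 + u) + u := by nlinarith [ihb]
      _ ≤ gam ((S.card : ℝ) + 1) u := hg

/-- Backward error of the mixed precision inner product with a final cast down:
exact products, `m−1` additions each with relative error at most `u_h`, and one
final relative error `δ₀` with `|δ₀| ≤ u_l`. Then
`(1+δ₀)·ŝ_m = Σ_{i=1}^m (xᵢ + Δxᵢ)yᵢ` with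
`|Δxᵢ| ≤ ((1+u_l)(1+γ_{m−1}(u_h)) − 1)·|xᵢ|`. -/
theorem stmt_10 (m : ℕ) (hm : 2 ≤ m) (uh ul : ℝ) (huh : 0 ≤ uh) (hul : 0 ≤ ul)
    (hgam : ((m : ℝ) - 1) * uh < 1)
    (x y δ : ℕ → ℝ) (hδ : ∀ k, 1 ≤ k → k ≤ m - 1 → |δ k| ≤ uh)
    (δ0 : ℝ) (hδ0 : |δ0| ≤ ul)
    (s : ℕ → ℝ) (hs1 : s 1 = x 1 * y 1)
    (hsk : ∀ k, 1 ≤ k → k ≤ m - 1 → s (k + 1) = (s k + x (k + 1) * y (k + 1)) * (1 + δ k)) :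
    ∃ Δx : ℕ → ℝ,
      (∀ i, 1 ≤ i → i ≤ m →
        |Δx i| ≤ ((1 + ul) * (1 + gam ((m : ℝ) - 1) uh) - 1) * |x i|) ∧
      (1 + δ0) * s m = ∑ i ∈ Finset.Icc 1 m, (x i + Δx i) * y i := by
  set F : ℕ → ℕ → ℝ := fun i n => ∏ k ∈ Finset.Ico (max (i-1) 1) n, (1 + δ k) with hF
  have main : ∀ n, 1 ≤ n → n ≤ m → s n = ∑ i ∈ Finset.Icc 1 n, x i * y i * F i n := by
    intro n hn
    induction n, hn using Nat.le_induction with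
    | base =>
      intro _
      simp [hF, hs1]
    | succ n hn ih =>
      intro hnm
      have hnm' : n ≤ m - 1 := by omega
      rw [hsk n hn hnm', ih (by omega),
        Finset.sum_Icc_succ_top (by omega : 1 ≤ n+1), add_mul, Finset.sum_mul]
      congr 1
      · apply Finset.sum_congr rfl
        intro i hi
        have hi' := Finset.mem_Icc.mp hi
        have hle : max (i-1) 1 ≤ n := by omega
        rw [hF]
        dsimp only
        rw [Finset.prod_Ico_succ_top hle]
        ring
      · have hmax : max ((n+1)-1) 1 = n := by omega
        rw [hF]
        dsimp only
        rw [hmax, Finset.prod_Ico_succ_top (le_refl n), Finset.Ico_self,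
          Finset.prod_empty, one_mul]
  refine ⟨fun i => x i * ((1 + δ0) * F i m - 1), ?_, ?_⟩
  · intro i hi1 him
    have hγ : 0 ≤ gam ((m : ℝ) - 1) uh := by
      apply gam_nonneg huh (by push_cast; norm_num; omega) hgam
    have hFb : |F i m - 1| ≤ gam ((m : ℝ) - 1) uh := by
      have hcard : ((Finset.Ico (max (i-1) 1) m).card : ℝ) ≤ (m : ℝ) - 1 := by
        rw [Nat.card_Ico]
        have : m - max (i-1) 1 ≤ m - 1 := by omega
        calc ((m - max (i-1) 1 : ℕ) : ℝ) ≤ ((m - 1 : ℕ) : ℝ) := by exact_mod_cast this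
          _ = (m : ℝ) - 1 := by push_cast [Nat.cast_sub (by omega : 1 ≤ m)]; ring
      have hcu : ((Finset.Ico (max (i-1) 1) m).card : ℝ) * uh < 1 :=
        lt_of_le_of_lt (mul_le_mul_of_nonneg_right hcard huh) hgam
      have hb := prod_bounds uh huh δ (Finset.Ico (max (i-1) 1) m)
        (fun k hk => by
          have := Finset.mem_Ico.mp hk
          exact hδ k (by omega) (by omega)) hcu
      exact le_trans hb (gam_mono huh (Nat.cast_nonneg _) hcard hgam)
    rw [abs_mul, mul_comm]
    apply mul_le_mul_of_nonneg_right _ (abs_nonneg _)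
    have key : (1 + δ0) * F i m - 1 = (1 + δ0) * (F i m - 1) + δ0 := by ring
    rw [key]
    calc |(1 + δ0) * (F i m - 1) + δ0| ≤ |1 + δ0| * |F i m - 1| + |δ0| := by
          rw [← abs_mul]; exact abs_add_le _ _
      _ ≤ (1 + ul) * gam ((m : ℝ) - 1) uh + ul := by
          have h1 : |1 + δ0| ≤ 1 + ul := by
            have := abs_le.mp hδ0
            rw [abs_le]; constructor <;> linarith
          have := abs_nonneg (F i m - 1)
          have := abs_nonneg (1 + δ0)
          nlinarith
      _ = (1 + ul) * (1 + gam ((m : ℝ) - 1) uh) - 1 := by ring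
  · rw [main m (by omega) le_rfl, Finset.mul_sum]
    apply Finset.sum_congr rfl
    intro i _
    ring
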